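/- Let 0 < α < β < 1, let I ≥ 1, and let p and q be probability distributions on {1,…,I} given by p_i = ((1−α)/(1−α^I))·α^{I−i} and q_i = ((1−β)/(1−β^I))·β^{I−i}. Then Σ_{i=1}^I i·p_i − Σ_{i=1}^I i·q_i ≤ β/(1−β) − α/(1−α). -/

import Mathlib

lemma tg_key (x : ℝ) (I : ℕ) :
    (1 - x) ^ 2 * ∑ i ∈ Finset.Icc 1 I, (i : ℝ) * x ^ (I - i)
      = I - (I + 1) * x + x ^ (I + 1) := by
  induction I with
  | zero => simp
  | succ n ih =>
    rw [Finset.sum_Icc_succ_top (by omega)]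
    have hs : ∑ i ∈ Finset.Icc 1 n, (i : ℝ) * x ^ (n + 1 - i)
        = x * ∑ i ∈ Finset.Icc 1 n, (i : ℝ) * x ^ (n - i) := by
      rw [Finset.mul_sum]
      refine Finset.sum_congr rfl fun i hi => ?_
      have hi' : i ≤ n := (Finset.mem_Icc.mp hi).2
      have : n + 1 - i = (n - i) + 1 := by omega
      rw [this, pow_succ]; ring
    rw [hs]
    push_cast
    simp only [Nat.sub_self, pow_zero, mul_one]
    linear_combination x * ih

lemma tg_mean (x : ℝ) (hx0 : 0 < x) (hx1 : x < 1) (I : ℕ) (hI : 1 ≤ I) :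
    ∑ i ∈ Finset.Icc 1 I, (i : ℝ) * ((1 - x) / (1 - x ^ I) * x ^ (I - i))
      = I - x / (1 - x) + I * x ^ I / (1 - x ^ I) := by
  have h1 : (0:ℝ) < 1 - x := by linarith
  have h2 : (0:ℝ) < 1 - x ^ I := by
    have := pow_lt_one₀ hx0.le hx1 (Nat.one_le_iff_ne_zero.mp hI)
    linarith
  have hfac : ∑ i ∈ Finset.Icc 1 I, (i : ℝ) * ((1 - x) / (1 - x ^ I) * x ^ (I - i))
      = (1 - x) / (1 - x ^ I) * ∑ i ∈ Finset.Icc 1 I, (i : ℝ) * x ^ (I - i) := by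
    rw [Finset.mul_sum]
    exact Finset.sum_congr rfl fun i _ => by ring
  have hk := tg_key x I
  rw [hfac]
  field_simp
  linear_combination hk

theorem truncated_geometric_mean_diff
    (α β : ℝ) (hα : 0 < α) (hαβ : α < β) (hβ : β < 1) (I : ℕ) (hI : 1 ≤ I) :
    (∑ i ∈ Finset.Icc 1 I, (i : ℝ) * ((1 - α) / (1 - α ^ I) * α ^ (I - i))) -
      (∑ i ∈ Finset.Icc 1 I, (i : ℝ) * ((1 - β) / (1 - β ^ I) * β ^ (I - i))) ≤
      β / (1 - β) - α / (1 - α) := by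
  have hβ0 : 0 < β := hα.trans hαβ
  have hα1 : α < 1 := hαβ.trans hβ
  rw [tg_mean α hα hα1 I hI, tg_mean β hβ0 hβ I hI]
  have hA : (0:ℝ) < 1 - α ^ I := by
    have := pow_lt_one₀ hα.le hα1 (Nat.one_le_iff_ne_zero.mp hI); linarith
  have hB : (0:ℝ) < 1 - β ^ I := by
    have := pow_lt_one₀ hβ0.le hβ (Nat.one_le_iff_ne_zero.mp hI); linarith
  have hpow : α ^ I ≤ β ^ I := pow_le_pow_left₀ hα.le hαβ.le I
  have hmono : α ^ I / (1 - α ^ I) ≤ β ^ I / (1 - β ^ I) := by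
    apply div_le_div₀ (by positivity) hpow hB (by linarith)
  have hIn : (0:ℝ) ≤ (I:ℝ) := Nat.cast_nonneg I
  have e1 : (I:ℝ) * α ^ I / (1 - α ^ I) = I * (α ^ I / (1 - α ^ I)) := by ring
  have e2 : (I:ℝ) * β ^ I / (1 - β ^ I) = I * (β ^ I / (1 - β ^ I)) := by ring
  have h := mul_le_mul_of_nonneg_left hmono hIn
  linarith
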